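/- Let m be a basic probability assignment on a finite nonempty set Θ such that there exists A ⊆ Θ with m(A) > 0 and |A| > 1, and suppose there is an integer k such that every focal element of m has cardinality 1 or k (i.e., m(A) > 0 implies |A| = 1 or |A| = k). Then the intersection probability coincides with the pignistic function: for every x ∈ Θ, p[Bel](x) = BetP[Bel](x) = ∑_{A⊆Θ : x∈A} m(A)/|A|. -/
import Mathlib


open Finset

/-- A basic probability assignment on a finite set `Θ`. -/
def IsBPA {Θ : Type*} [Fintype Θ] (m : Finset Θ → ℝ) : Prop :=
  m ∅ = 0 ∧ (∀ A, 0 ≤ m A) ∧ (∑ A : Finset Θ, m A) = 1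

/-- Belief function `Bel(A) = ∑_{B ⊆ A} m(B)`. -/
noncomputable def Bel {Θ : Type*} [Fintype Θ] [DecidableEq Θ] (m : Finset Θ → ℝ)
    (A : Finset Θ) : ℝ :=
  ∑ B ∈ A.powerset, m B

/-- Plausibility function `Pl(A) = ∑_{B ∩ A ≠ ∅} m(B)`. -/
noncomputable def Pl {Θ : Type*} [Fintype Θ] [DecidableEq Θ] (m : Finset Θ → ℝ)
    (A : Finset Θ) : ℝ :=
  ∑ B ∈ Finset.univ.filter (fun B => B ∩ A ≠ ∅), m B

/-- Total mass of singletons `k_Bel`. -/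
noncomputable def kBel {Θ : Type*} [Fintype Θ] (m : Finset Θ → ℝ) : ℝ :=
  ∑ x : Θ, m {x}

/-- Total plausibility of singletons `k_Pl`. -/
noncomputable def kPl {Θ : Type*} [Fintype Θ] [DecidableEq Θ] (m : Finset Θ → ℝ) : ℝ :=
  ∑ x : Θ, Pl m {x}

/-- `β[Bel] = (1 - k_Bel)/(k_Pl - k_Bel)`. -/
noncomputable def betaBel {Θ : Type*} [Fintype Θ] [DecidableEq Θ] (m : Finset Θ → ℝ) : ℝ :=
  (1 - kBel m) / (kPl m - kBel m)

/-- The intersection probability `p[Bel](x) = m(x) + β[Bel]⬝(Pl(x) - m(x))`. -/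
noncomputable def pInt {Θ : Type*} [Fintype Θ] [DecidableEq Θ] (m : Finset Θ → ℝ)
    (x : Θ) : ℝ :=
  m {x} + betaBel m * (Pl m {x} - m {x})

/-- The pignistic function `BetP[Bel](x) = ∑_{A ∋ x} m(A)/|A|`. -/
noncomputable def betP {Θ : Type*} [Fintype Θ] [DecidableEq Θ]
    (m : Finset Θ → ℝ) (x : Θ) : ℝ :=
  ∑ A ∈ Finset.univ.filter (fun A : Finset Θ => x ∈ A), m A / (A.card : ℝ)

/-- Theorem 6: if `m` has some focal element of size `> 1` and all its
focal elements have cardinality 1 or `k`, then the intersection probability coincides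
with the pignistic function. -/
theorem pInt_eq_betP_of_focal_sizes_one_or_k
    {Θ : Type*} [Fintype Θ] [DecidableEq Θ] [Nonempty Θ]
    (m : Finset Θ → ℝ) (hm : IsBPA m)
    (hnonBayes : ∃ A : Finset Θ, 0 < m A ∧ 1 < A.card)
    (hk : ∃ k : ℕ, ∀ A : Finset Θ, 0 < m A → A.card = 1 ∨ A.card = k) :
    ∀ x : Θ, pInt m x = betP m x := by
  obtain ⟨m0, mnn, msum⟩ := hm
  obtain ⟨k, hk⟩ := hk
  obtain ⟨A, hA, hAcard⟩ := hnonBayes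
  have hAk : A.card = k := by
    rcases hk A hA with h | h
    · omega
    · exact h
  have hk1 : 1 < k := hAk ▸ hAcard
  have hkne : (k : ℝ) ≠ 0 := by positivity
  -- Pl on a singleton
  have hPl : ∀ x : Θ, Pl m {x} = ∑ B ∈ Finset.univ.filter (fun B => x ∈ B), m B := by
    intro x
    unfold Pl
    congr 1
    apply Finset.filter_congr
    intro B _
    simp [← Finset.nonempty_iff_ne_empty, Finset.Nonempty]
  -- kBel as filtered sum over singletons
  have hkBel : kBel m = ∑ B ∈ Finset.univ.filter (fun B : Finset Θ => B.card = 1), m B := by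
    unfold kBel
    apply Finset.sum_bij (fun x _ => ({x} : Finset Θ))
    · intro x _; simp
    · intro x _ y _ h; exact Finset.singleton_injective h
    · intro B hB
      simp only [Finset.mem_filter, Finset.mem_univ, true_and] at hB
      obtain ⟨a, rfl⟩ := Finset.card_eq_one.mp hB
      exact ⟨a, Finset.mem_univ a, rfl⟩
    · intro x _; rfl
  -- kPl by double counting
  have hkPl : kPl m = ∑ B : Finset Θ, (B.card : ℝ) * m B := by
    unfold kPl
    simp_rw [hPl, Finset.sum_filter]
    rw [Finset.sum_comm]
    refine Finset.sum_congr rfl fun B _ => ?_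
    rw [Finset.sum_ite_mem, Finset.univ_inter, Finset.sum_const, nsmul_eq_mul]
  have honem : 1 - kBel m = ∑ B ∈ Finset.univ.filter (fun B : Finset Θ => ¬ B.card = 1), m B := by
    rw [hkBel, ← msum, ← Finset.sum_filter_add_sum_filter_not Finset.univ (fun B : Finset Θ => B.card = 1)]
    ring
  have hpos : 0 < 1 - kBel m := by
    rw [honem]
    apply Finset.sum_pos' (fun B _ => mnn B)
    exact ⟨A, by simp [Finset.mem_filter]; omega, hA⟩
  have hdiff : kPl m - kBel m = (k : ℝ) * (1 - kBel m) := by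
    rw [honem, hkPl, hkBel, Finset.sum_filter, Finset.sum_filter, ← Finset.sum_sub_distrib,
      Finset.mul_sum]
    refine Finset.sum_congr rfl fun B _ => ?_
    rcases eq_or_lt_of_le (mnn B) with h0 | h0
    · simp [← h0]
    · rcases hk B h0 with h | h
      · simp [h]
      · by_cases h1 : B.card = 1
        · simp [h1]
        · have hkne1 : k ≠ 1 := by omega
          simp [h1, h, hkne1]
  have hbeta : betaBel m = 1 / k := by
    unfold betaBel
    rw [hdiff]
    rw [mul_comm, div_mul_eq_div_div, div_self (ne_of_gt hpos)]
  intro x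
  rw [pInt, hbeta, hPl x, betP]
  have hmx : m {x} = ∑ B ∈ Finset.univ.filter (fun B => x ∈ B), (if B = {x} then m B else 0) := by
    rw [Finset.sum_ite_eq']
    simp
  rw [hmx, ← Finset.sum_sub_distrib, Finset.mul_sum, ← Finset.sum_add_distrib]
  refine Finset.sum_congr rfl fun B hB => ?_
  simp only [Finset.mem_filter, Finset.mem_univ, true_and] at hB
  rcases eq_or_lt_of_le (mnn B) with h0 | h0
  · simp [← h0]
  · rcases hk B h0 with h | h
    · obtain ⟨a, rfl⟩ := Finset.card_eq_one.mp h
      simp at hB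
      subst hB
      simp
    · have hne : B ≠ {x} := by
        intro e; rw [e] at h; simp at h; omega
      simp [hne, h]
      ring
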